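/- Let n ≥ 1 be an integer. Then the operator norm ‖P_U (P_V P_U)^n − P_{U∩V}‖ equals c_F^{2n}, where c_F is the cosine of the Friedrichs angle between U and V. (Odd powers of alternating projections.) -/

import Mathlib

noncomputable section

variable {X : Type*} [NormedAddCommGroup X] [InnerProductSpace ℝ X] [CompleteSpace X]

/-- The orthogonal projection onto a closed subspace `W`, as an operator on `X`. -/
noncomputable def proj (W : Submodule ℝ X) [Submodule.HasOrthogonalProjection W] : X →L[ℝ] X :=
  W.subtypeL.comp (W.orthogonalProjectionOnto)

instance infHOP (U V : Submodule ℝ X) [CompleteSpace U] [CompleteSpace V] :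
    Submodule.HasOrthogonalProjection (U ⊓ V) := by
  have hU : IsClosed (U : Set X) := (completeSpace_coe_iff_isComplete.mp ‹_›).isClosed
  have hV : IsClosed (V : Set X) := (completeSpace_coe_iff_isComplete.mp ‹_›).isClosed
  have : CompleteSpace (U ⊓ V : Submodule ℝ X) := (hU.inter hV).completeSpace_coe
  infer_instance

/-- The fixed point set `Fix T = {x | T x = x}` of a continuous linear operator `T`,
as a submodule of `X`. -/
noncomputable def fixedSpace (T : X →L[ℝ] X) : Submodule ℝ X := LinearMap.ker ((T - 1 : X →L[ℝ] X) : X →ₗ[ℝ] X)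

instance fixedSpaceHOP (T : X →L[ℝ] X) : Submodule.HasOrthogonalProjection (fixedSpace T) := by
  have h : IsClosed ((fixedSpace T : Submodule ℝ X) : Set X) := by
    have : ((fixedSpace T : Submodule ℝ X) : Set X) = {x | T x = x} := by
      ext x; simp [fixedSpace, LinearMap.mem_ker, sub_eq_zero]
    rw [this]
    exact isClosed_eq T.continuous continuous_id
  have : CompleteSpace (fixedSpace T) := h.completeSpace_coe
  infer_instance

/-- The reflector `R_W = 2 P_W − Id` associated with `W`. -/
noncomputable def reflector (W : Submodule ℝ X) [Submodule.HasOrthogonalProjection W] : X →L[ℝ] X :=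
  2 • proj W - 1

/-- The Douglas–Rachford operator `T = T_{V,U} = P_V (2 P_U − Id) + Id − P_U`.
(The first argument is `U`, the second is `V`.) -/
noncomputable def drOperator (U V : Submodule ℝ X) [Submodule.HasOrthogonalProjection U]
    [Submodule.HasOrthogonalProjection V] : X →L[ℝ] X :=
  proj V * (2 • proj U - 1) + 1 - proj U

/-- The cosine of the Friedrichs angle between `U` and `V`. -/
noncomputable def friedrichs (U V : Submodule ℝ X) : ℝ :=
  sSup {c : ℝ | ∃ u v : X, u ∈ U ⊓ (U ⊓ V)ᗮ ∧ v ∈ V ⊓ (U ⊓ V)ᗮ ∧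
    ‖u‖ ≤ 1 ∧ ‖v‖ ≤ 1 ∧ c = inner ℝ u v}

set_option linter.unusedSectionVars false

-- helpers
instance infCS (U V : Submodule ℝ X) [CompleteSpace U] [CompleteSpace V] :
    CompleteSpace (U ⊓ V : Submodule ℝ X) := by
  have hU : IsClosed (U : Set X) := (completeSpace_coe_iff_isComplete.mp ‹_›).isClosed
  have hV : IsClosed (V : Set X) := (completeSpace_coe_iff_isComplete.mp ‹_›).isClosed
  exact (hU.inter hV).completeSpace_coe

lemma proj_apply_mem (W : Submodule ℝ X) [Submodule.HasOrthogonalProjection W] (x : X) :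
    proj W x ∈ W := Submodule.coe_mem _

lemma proj_eq_self {W : Submodule ℝ X} [Submodule.HasOrthogonalProjection W] {x : X} (h : x ∈ W) :
    proj W x = x := Submodule.starProjection_eq_self_iff.mpr h

lemma proj_eq_zero {W : Submodule ℝ X} [Submodule.HasOrthogonalProjection W] {x : X} (h : x ∈ Wᗮ) :
    proj W x = 0 := by
  show ((W.orthogonalProjectionOnto x : W) : X) = 0
  rw [Submodule.orthogonalProjectionOnto_apply_of_mem_orthogonal h]; rfl

lemma proj_inner (W : Submodule ℝ X) [Submodule.HasOrthogonalProjection W] (x y : X) :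
    (inner ℝ (proj W x) y : ℝ) = inner ℝ x (proj W y) :=
  Submodule.inner_starProjection_left_eq_right W x y

lemma proj_norm_le (W : Submodule ℝ X) [Submodule.HasOrthogonalProjection W] (x : X) :
    ‖proj W x‖ ≤ ‖x‖ := by
  have h : ‖W.orthogonalProjectionOnto x‖ ≤ 1 * ‖x‖ :=
    W.orthogonalProjectionOnto.le_of_opNorm_le W.orthogonalProjectionOnto_norm_le x
  rw [one_mul] at h; exact h

lemma proj_sa (W : Submodule ℝ X) [CompleteSpace W] : IsSelfAdjoint (proj W) :=
  isSelfAdjoint_starProjection W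

lemma proj_idem (W : Submodule ℝ X) [Submodule.HasOrthogonalProjection W] :
    proj W * proj W = proj W := by
  ext x
  exact proj_eq_self (proj_apply_mem W x)

lemma sub_proj_norm_le (W : Submodule ℝ X) [Submodule.HasOrthogonalProjection W] (z : X) :
    ‖z - proj W z‖ ≤ ‖z‖ := by
  have h0 : (inner ℝ (z - proj W z) (proj W z) : ℝ) = 0 := by
    rw [real_inner_comm]
    exact (Submodule.sub_starProjection_mem_orthogonal (K := W) z) _ (proj_apply_mem W z)
  have : ‖z‖ ^ 2 = ‖z - proj W z‖ ^ 2 + ‖proj W z‖ ^ 2 := by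
    have := norm_add_sq_real (z - proj W z) (proj W z)
    simpa [h0] using this
  nlinarith [norm_nonneg (z - proj W z), norm_nonneg z, norm_nonneg (proj W z)]

section ops
variable (U V : Submodule ℝ X) [CompleteSpace U] [CompleteSpace V]

lemma pr_id : proj U * proj (U ⊓ V) = proj (U ⊓ V) := by
  ext x
  exact proj_eq_self ((inf_le_left : U ⊓ V ≤ U) (proj_apply_mem _ x))

lemma qr_id : proj V * proj (U ⊓ V) = proj (U ⊓ V) := by
  ext x
  exact proj_eq_self ((inf_le_right : U ⊓ V ≤ V) (proj_apply_mem _ x))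

lemma rp_id : proj (U ⊓ V) * proj U = proj (U ⊓ V) := by
  have h := congrArg star (pr_id U V)
  rwa [star_mul, (proj_sa _).star_eq, (proj_sa _).star_eq] at h

lemma rq_id : proj (U ⊓ V) * proj V = proj (U ⊓ V) := by
  have h := congrArg star (qr_id U V)
  rwa [star_mul, (proj_sa _).star_eq, (proj_sa _).star_eq] at h

lemma inner_B (x y : X) :
    (inner ℝ ((proj V * proj U - proj (U ⊓ V)) x) y : ℝ)
      = inner ℝ (proj U x - proj (U ⊓ V) x) (proj V y - proj (U ⊓ V) y) := by
  have hPxRy : (inner ℝ (proj U x) (proj (U ⊓ V) y) : ℝ) = inner ℝ x (proj (U ⊓ V) y) := by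
    rw [proj_inner, proj_eq_self ((inf_le_left : U ⊓ V ≤ U) (proj_apply_mem _ y))]
  have hRxQy : (inner ℝ (proj (U ⊓ V) x) (proj V y) : ℝ) = inner ℝ x (proj (U ⊓ V) y) := by
    rw [← proj_inner V, proj_eq_self ((inf_le_right : U ⊓ V ≤ V) (proj_apply_mem _ x)),
      proj_inner]
  have hRxRy : (inner ℝ (proj (U ⊓ V) x) (proj (U ⊓ V) y) : ℝ) = inner ℝ x (proj (U ⊓ V) y) :=
    calc (inner ℝ (proj (U ⊓ V) x) (proj (U ⊓ V) y) : ℝ)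
        = inner ℝ x (proj (U ⊓ V) (proj (U ⊓ V) y)) := proj_inner _ _ _
      _ = inner ℝ x (proj (U ⊓ V) y) := by rw [proj_eq_self (proj_apply_mem _ _)]
  have hQPx : (inner ℝ (proj V (proj U x)) y : ℝ) = inner ℝ (proj U x) (proj V y) :=
    proj_inner _ _ _
  have hRx : (inner ℝ (proj (U ⊓ V) x) y : ℝ) = inner ℝ x (proj (U ⊓ V) y) := proj_inner _ _ _
  simp only [ContinuousLinearMap.sub_apply, ContinuousLinearMap.mul_apply, inner_sub_left,
    inner_sub_right, hQPx, hRx, hPxRy, hRxQy, hRxRy]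
  ring

lemma memU' (x : X) : proj U x - proj (U ⊓ V) x ∈ U ⊓ (U ⊓ V)ᗮ := by
  refine Submodule.mem_inf.mpr ⟨sub_mem (proj_apply_mem U x)
    ((inf_le_left : U ⊓ V ≤ U) (proj_apply_mem _ x)), ?_⟩
  intro w hw
  have h1 : (inner ℝ w (proj U x) : ℝ) = inner ℝ x w := by
    rw [real_inner_comm, proj_inner, proj_eq_self ((inf_le_left : U ⊓ V ≤ U) hw)]
  have h2 : (inner ℝ w (proj (U ⊓ V) x) : ℝ) = inner ℝ x w := by
    rw [real_inner_comm, proj_inner, proj_eq_self hw]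
  rw [inner_sub_right, h1, h2, sub_self]

lemma memV' (x : X) : proj V x - proj (U ⊓ V) x ∈ V ⊓ (U ⊓ V)ᗮ := by
  refine Submodule.mem_inf.mpr ⟨sub_mem (proj_apply_mem V x)
    ((inf_le_right : U ⊓ V ≤ V) (proj_apply_mem _ x)), ?_⟩
  intro w hw
  have h1 : (inner ℝ w (proj V x) : ℝ) = inner ℝ x w := by
    rw [real_inner_comm, proj_inner, proj_eq_self ((inf_le_right : U ⊓ V ≤ V) hw)]
  have h2 : (inner ℝ w (proj (U ⊓ V) x) : ℝ) = inner ℝ x w := by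
    rw [real_inner_comm, proj_inner, proj_eq_self hw]
  rw [inner_sub_right, h1, h2, sub_self]

lemma normU' (x : X) : ‖proj U x - proj (U ⊓ V) x‖ ≤ ‖x‖ := by
  have h : proj (U ⊓ V) x = proj (U ⊓ V) (proj U x) := by
    conv_lhs => rw [← rp_id U V]
    rfl
  rw [h]
  exact le_trans (sub_proj_norm_le _ _) (proj_norm_le _ _)

lemma normV' (x : X) : ‖proj V x - proj (U ⊓ V) x‖ ≤ ‖x‖ := by
  have h : proj (U ⊓ V) x = proj (U ⊓ V) (proj V x) := by
    conv_lhs => rw [← rq_id U V]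
    rfl
  rw [h]
  exact le_trans (sub_proj_norm_le _ _) (proj_norm_le _ _)

end ops

section main
variable (U V : Submodule ℝ X) [CompleteSpace U] [CompleteSpace V]

lemma S_le_normB {c : ℝ}
    (hc : c ∈ {c : ℝ | ∃ u v : X, u ∈ U ⊓ (U ⊓ V)ᗮ ∧ v ∈ V ⊓ (U ⊓ V)ᗮ ∧
      ‖u‖ ≤ 1 ∧ ‖v‖ ≤ 1 ∧ c = inner ℝ u v}) :
    c ≤ ‖proj V * proj U - proj (U ⊓ V)‖ := by
  set B := proj V * proj U - proj (U ⊓ V) with hB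
  obtain ⟨u, v, hu, hv, hun, hvn, rfl⟩ := hc
  obtain ⟨huU, huO⟩ := Submodule.mem_inf.mp hu
  obtain ⟨hvV, hvO⟩ := Submodule.mem_inf.mp hv
  have hBu : (inner ℝ (B u) v : ℝ) = inner ℝ u v := by
    rw [hB, inner_B, proj_eq_self huU, proj_eq_zero huO, proj_eq_self hvV, proj_eq_zero hvO,
      sub_zero, sub_zero]
  calc (inner ℝ u v : ℝ) = inner ℝ (B u) v := hBu.symm
    _ ≤ ‖B u‖ * ‖v‖ := real_inner_le_norm _ _
    _ ≤ (‖B‖ * ‖u‖) * ‖v‖ := mul_le_mul_of_nonneg_right (B.le_opNorm u) (norm_nonneg v)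
    _ ≤ ‖B‖ := by
      have h1 : ‖B‖ * ‖u‖ * ‖v‖ ≤ ‖B‖ * ‖u‖ :=
        mul_le_of_le_one_right (mul_nonneg (norm_nonneg _) (norm_nonneg _)) hvn
      have h2 : ‖B‖ * ‖u‖ ≤ ‖B‖ := mul_le_of_le_one_right (norm_nonneg _) hun
      linarith

lemma zero_mem_S : (0 : ℝ) ∈ {c : ℝ | ∃ u v : X, u ∈ U ⊓ (U ⊓ V)ᗮ ∧ v ∈ V ⊓ (U ⊓ V)ᗮ ∧
      ‖u‖ ≤ 1 ∧ ‖v‖ ≤ 1 ∧ c = inner ℝ u v} :=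
  ⟨0, 0, zero_mem _, zero_mem _, by simp, by simp, by simp⟩

lemma norm_B : ‖proj V * proj U - proj (U ⊓ V)‖ = friedrichs U V := by
  set B := proj V * proj U - proj (U ⊓ V) with hB
  set S := {c : ℝ | ∃ u v : X, u ∈ U ⊓ (U ⊓ V)ᗮ ∧ v ∈ V ⊓ (U ⊓ V)ᗮ ∧
      ‖u‖ ≤ 1 ∧ ‖v‖ ≤ 1 ∧ c = inner ℝ u v} with hS
  have hbdd : BddAbove S := ⟨‖B‖, fun c hc => S_le_normB U V hc⟩
  have hzero : (0 : ℝ) ∈ S := zero_mem_S U V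
  have hc0 : (0 : ℝ) ≤ sSup S := le_csSup hbdd hzero
  show ‖B‖ = sSup S
  apply le_antisymm
  · apply ContinuousLinearMap.opNorm_le_bound _ hc0
    intro x
    by_cases hx : B x = 0
    · rw [hx, norm_zero]
      exact mul_nonneg hc0 (norm_nonneg x)
    · have hxn : x ≠ 0 := by rintro rfl; exact hx (map_zero B)
      have hx0 : (0 : ℝ) < ‖x‖ := norm_pos_iff.mpr hxn
      have hBx0 : (0 : ℝ) < ‖B x‖ := norm_pos_iff.mpr hx
      set y : X := ‖B x‖⁻¹ • B x with hy
      have hyn : ‖y‖ = 1 := by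
        rw [hy, norm_smul, norm_inv, norm_norm, inv_mul_cancel₀ hBx0.ne']
      set u : X := ‖x‖⁻¹ • (proj U x - proj (U ⊓ V) x) with hu
      set v : X := proj V y - proj (U ⊓ V) y with hv
      have hun : ‖u‖ ≤ 1 := by
        rw [hu, norm_smul, norm_inv, norm_norm, inv_mul_eq_div, div_le_one hx0]
        exact normU' U V x
      have hvn : ‖v‖ ≤ 1 := by
        rw [hv]
        calc ‖proj V y - proj (U ⊓ V) y‖ ≤ ‖y‖ := normV' U V y
          _ = 1 := hyn
      have hmemS : (inner ℝ u v : ℝ) ∈ S :=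
        ⟨u, v, Submodule.smul_mem _ _ (memU' U V x), memV' U V y, hun, hvn, rfl⟩
      have hBxy : ‖B x‖ = inner ℝ (B x) y := by
        rw [hy, real_inner_smul_right, real_inner_self_eq_norm_mul_norm]
        field_simp
      have hkey : (inner ℝ (B x) y : ℝ) = ‖x‖ * inner ℝ u v := by
        rw [hB, inner_B, hu, real_inner_smul_left]
        field_simp
        rfl
      calc ‖B x‖ = inner ℝ (B x) y := hBxy
        _ = ‖x‖ * inner ℝ u v := hkey
        _ ≤ ‖x‖ * sSup S := mul_le_mul_of_nonneg_left (le_csSup hbdd hmemS) (norm_nonneg x)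
        _ = sSup S * ‖x‖ := mul_comm _ _
  · exact csSup_le ⟨0, hzero⟩ (fun c hc => S_le_normB U V hc)

end main

open scoped NNReal in
lemma sa_norm_pow {E : Type*} [NormedRing E] [StarRing E] [CStarRing E] {a : E}
    (ha : IsSelfAdjoint a) {n : ℕ} (hn : 1 ≤ n) : ‖a ^ n‖ = ‖a‖ ^ n := by
  rcases eq_or_ne a 0 with rfl | h0
  · simp [zero_pow (show n ≠ 0 by omega)]
  · have hlt : n < 2 ^ n := Nat.lt_two_pow_self
    have key := ha.nnnorm_pow_two_pow n
    have hup : ‖a ^ n‖₊ ≤ ‖a‖₊ ^ n := nnnorm_pow_le' a (by omega)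
    have hups : ‖a ^ (2 ^ n - n)‖₊ ≤ ‖a‖₊ ^ (2 ^ n - n) := nnnorm_pow_le' a (by omega)
    have h1 : ‖a‖₊ ^ n * ‖a‖₊ ^ (2 ^ n - n) ≤ ‖a ^ n‖₊ * ‖a‖₊ ^ (2 ^ n - n) := by
      calc ‖a‖₊ ^ n * ‖a‖₊ ^ (2 ^ n - n) = ‖a‖₊ ^ (2 ^ n) := by rw [← pow_add]; congr 1; omega
        _ = ‖a ^ 2 ^ n‖₊ := key.symm
        _ = ‖a ^ n * a ^ (2 ^ n - n)‖₊ := by rw [← pow_add]; congr 2; omega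
        _ ≤ ‖a ^ n‖₊ * ‖a ^ (2 ^ n - n)‖₊ := nnnorm_mul_le _ _
        _ ≤ ‖a ^ n‖₊ * ‖a‖₊ ^ (2 ^ n - n) := mul_le_mul_right hups _
    have hpos : (0 : ℝ≥0) < ‖a‖₊ ^ (2 ^ n - n) := pow_pos (nnnorm_pos.mpr h0) _
    have hfin : ‖a ^ n‖₊ = ‖a‖₊ ^ n := le_antisymm hup (le_of_mul_le_mul_right h1 hpos)
    have := congrArg (fun t : ℝ≥0 => (t : ℝ)) hfin
    push_cast at this
    simpa using this

section alg
variable (U V : Submodule ℝ X) [CompleteSpace U] [CompleteSpace V]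

lemma A_eq :
    (proj U * proj V - proj (U ⊓ V)) * (proj V * proj U - proj (U ⊓ V))
      = proj U * (proj V * proj U) - proj (U ⊓ V) := by
  have t1 : (proj U * proj V) * (proj V * proj U) = proj U * (proj V * proj U) := by
    rw [mul_assoc, ← mul_assoc (proj V), proj_idem]
  have t2 : (proj U * proj V) * proj (U ⊓ V) = proj (U ⊓ V) := by
    rw [mul_assoc, qr_id, pr_id]
  have t3 : proj (U ⊓ V) * (proj V * proj U) = proj (U ⊓ V) := by
    rw [← mul_assoc, rq_id, rp_id]
  rw [mul_sub, sub_mul, sub_mul, t1, t2, t3, proj_idem, sub_self, sub_zero]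

lemma pow_R (n : ℕ) : (proj V * proj U) ^ n * proj (U ⊓ V) = proj (U ⊓ V) := by
  induction n with
  | zero => rw [pow_zero, one_mul]
  | succ m ih =>
    rw [pow_succ', mul_assoc, ih, mul_assoc, pr_id, qr_id]

lemma pow_P (m : ℕ) : (proj V * proj U) ^ (m + 1) * proj U = (proj V * proj U) ^ (m + 1) := by
  rw [pow_succ, mul_assoc, mul_assoc, proj_idem]

lemma pow_eq (n : ℕ) (hn : 1 ≤ n) :
    proj U * (proj V * proj U) ^ n - proj (U ⊓ V)
      = ((proj U * proj V - proj (U ⊓ V)) * (proj V * proj U - proj (U ⊓ V))) ^ n := by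
  induction n, hn using Nat.le_induction with
  | base => rw [pow_one, A_eq, pow_one]
  | succ m hm ih =>
    obtain ⟨k, rfl⟩ := Nat.exists_eq_add_of_le hm
    have hA := A_eq U V
    conv_rhs => rw [pow_succ, ← ih, hA]
    have h1 : (proj U * (proj V * proj U) ^ (1 + k)) * (proj U * (proj V * proj U))
        = proj U * (proj V * proj U) ^ (1 + k + 1) := by
      rw [add_comm 1 k]
      rw [mul_assoc, ← mul_assoc ((proj V * proj U) ^ (k + 1)), pow_P, ← pow_succ]
    have h2 : (proj U * (proj V * proj U) ^ (1 + k)) * proj (U ⊓ V) = proj (U ⊓ V) := by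
      rw [mul_assoc, pow_R, pr_id]
    have h3 : proj (U ⊓ V) * (proj U * (proj V * proj U)) = proj (U ⊓ V) := by
      rw [← mul_assoc, rp_id, ← mul_assoc, rq_id, rp_id]
    rw [mul_sub, sub_mul, sub_mul, h1, h2, h3, proj_idem, sub_self, sub_zero]

end alg

/-- odd powers of alternating projections:
`‖P_U (P_V P_U)^n − P_{U∩V}‖ = c_F^{2n}` for every integer `n ≥ 1`. -/
theorem odd_powers_alternating_projections
    (U V : Submodule ℝ X) [CompleteSpace U] [CompleteSpace V] (n : ℕ) (hn : 1 ≤ n) :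
    ‖proj U * (proj V * proj U) ^ n - proj (U ⊓ V)‖ = friedrichs U V ^ (2 * n) := by

  have hstar : star (proj V * proj U - proj (U ⊓ V)) = proj U * proj V - proj (U ⊓ V) := by
    rw [star_sub, star_mul, (proj_sa U).star_eq, (proj_sa V).star_eq, (proj_sa (U ⊓ V)).star_eq]
  have hsa : IsSelfAdjoint
      ((proj U * proj V - proj (U ⊓ V)) * (proj V * proj U - proj (U ⊓ V))) := by
    rw [← hstar]
    exact IsSelfAdjoint.star_mul_self _
  have hnorm1 : ‖(proj U * proj V - proj (U ⊓ V)) * (proj V * proj U - proj (U ⊓ V))‖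
      = friedrichs U V * friedrichs U V := by
    rw [← hstar]
    have h := CStarRing.norm_star_mul_self (x := proj V * proj U - proj (U ⊓ V))
    rw [norm_B] at h
    exact h
  rw [pow_eq U V n hn, sa_norm_pow hsa hn, hnorm1, ← pow_two, ← pow_mul]
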